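/- The strengthening relation ⊑ is antisymmetric: if T̃₁ ⊑ T̃₂ and T̃₂ ⊑ T̃₁ then T̃₁ = T̃₂. -/
import Mathlib


inductive Place where
  | loc : Place
  | remote : Place
deriving DecidableEq

structure LVal where
  path : List Unit
  root : ℕ
deriving DecidableEq

mutual
inductive BaseTy where
  | unit : BaseTy
  | int : BaseTy
  | borrow : Bool → Set LVal → BaseTy
  | box : Ty → BaseTy
inductive Ty where
  | mk : BaseTy → Place → Ty
end

inductive PTy where
  | ty : Ty → PTy
  | pbox : PTy → Place → PTy
  | undef : Ty → PTy

inductive Str : PTy → PTy → Prop where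
  | reflex (t : PTy) : Str t t
  | box {t1 t2 : PTy} (Q : Place) : Str t1 t2 → Str (.pbox t1 Q) (.pbox t2 Q)
  | borrow {u w : Set LVal} (m : Bool) (Q : Place) : u ⊆ w →
      Str (.ty (.mk (.borrow m u) Q)) (.ty (.mk (.borrow m w) Q))
  | undefA {T1 T2 : Ty} : Str (.ty T1) (.ty T2) → Str (.undef T1) (.undef T2)
  | undefB {T1 T2 : Ty} : Str (.ty T1) (.ty T2) → Str (.ty T1) (.undef T2)
  | undefC {t1 : PTy} {T2 : Ty} (Q : Place) : Str t1 (.undef T2) →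
      Str (.pbox t1 Q) (.undef (.mk (.box T2) Q))

theorem str_antisymmetric : ∀ t1 t2 : PTy, Str t1 t2 → Str t2 t1 → t1 = t2 := by
  intro t1 t2 h1
  induction h1 with
  | reflex t => intro _; rfl
  | box Q h ih =>
    intro h2
    cases h2 with
    | reflex => rfl
    | box _ h' => rw [ih h']
  | borrow m Q h =>
    intro h2
    cases h2 with
    | reflex => rfl
    | borrow _ _ h' => rw [Set.Subset.antisymm h h']
  | undefA h ih =>
    intro h2
    cases h2 with
    | reflex => rfl
    | undefA h' => injection ih h' with h3; rw [h3]
  | undefB h ih => intro h2; cases h2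
  | undefC Q h ih => intro h2; cases h2
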